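/- Let 0 < μ < 1 and μ² ≤ ν ≤ μ. With P₁(q) = 3q² − 2q³, the infimum of ∫ P₁(q) dπ(q) over all probability measures π on [0,1] with ∫ q dπ = μ and ∫ q² dπ = ν equals ν + 2(μ−ν)²/(1−μ), and this infimum is attained. -/

import Mathlib

open MeasureTheory

/-- The three-vote strict-majority success probability: `P₁(q) = 3q² − 2q³`. -/
def P1 (q : ℝ) : ℝ := 3 * q ^ 2 - 2 * q ^ 3

lemma integrable_dirac' {f : ℝ → ℝ} (a : ℝ) : Integrable f (Measure.dirac a) :=
  (integrable_const (f a)).congr (Filter.EventuallyEq.symm (MeasureTheory.ae_eq_dirac f))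

/-- **Sharp three-vote lower endpoint.** For `0 < μ < 1` and `μ² ≤ ν ≤ μ`, the infimum of
`∫ P₁ dπ` over all probability measures `π` on `[0,1]` with first moment `μ` and second
moment `ν` equals `ν + 2(μ−ν)²/(1−μ)`, and it is attained. -/
theorem three_vote_lower (μ ν : ℝ) (hμ0 : 0 < μ) (hμ1 : μ < 1)
    (hν1 : μ ^ 2 ≤ ν) (hν2 : ν ≤ μ) :
    IsLeast {x | ∃ π : Measure ℝ, IsProbabilityMeasure π ∧
        π ((Set.Icc (0 : ℝ) 1)ᶜ) = 0 ∧ (∫ q, q ∂π) = μ ∧ (∫ q, q ^ 2 ∂π) = ν ∧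
        (∫ q, P1 q ∂π) = x}
      (ν + 2 * (μ - ν) ^ 2 / (1 - μ)) := by
  have h1μ : (0:ℝ) < 1 - μ := by linarith
  set t : ℝ := (μ - ν) / (1 - μ) with ht_def
  have ht' : t * (1 - μ) = μ - ν := by
    rw [ht_def, div_mul_cancel₀ _ h1μ.ne']
  have ht0 : 0 ≤ t := div_nonneg (by linarith) h1μ.le
  have htμ : t ≤ μ := by
    rw [ht_def, div_le_iff₀ h1μ]; nlinarith
  have ht1 : t < 1 := lt_of_le_of_lt htμ hμ1
  have h1t : (0:ℝ) < 1 - t := by linarith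
  constructor
  · -- membership : the two-point measure at t and 1
    set w : ℝ := (1 - μ) / (1 - t) with hw_def
    have hw' : w * (1 - t) = 1 - μ := by rw [hw_def, div_mul_cancel₀ _ h1t.ne']
    have hw0 : 0 ≤ w := div_nonneg h1μ.le h1t.le
    have hw1 : w ≤ 1 := by
      rw [hw_def, div_le_one h1t]; linarith
    refine ⟨(ENNReal.ofReal w) • Measure.dirac t + (ENNReal.ofReal (1 - w)) • Measure.dirac 1,
      ?_, ?_, ?_, ?_, ?_⟩
    · constructor
      simp only [Measure.add_apply, Measure.smul_apply, smul_eq_mul,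
        Measure.dirac_apply_of_mem (Set.mem_univ _), mul_one]
      rw [← ENNReal.ofReal_add hw0 (by linarith)]
      norm_num
    · have h1 : t ∈ Set.Icc (0:ℝ) 1 := ⟨ht0, ht1.le⟩
      have h2 : (1:ℝ) ∈ Set.Icc (0:ℝ) 1 := by norm_num
      simp only [Measure.add_apply, Measure.smul_apply, smul_eq_mul]
      rw [Measure.dirac_apply' _ (measurableSet_Icc.compl),
        Measure.dirac_apply' _ (measurableSet_Icc.compl)]
      simp [Set.indicator_of_notMem, h1, h2]
    · rw [integral_add_measure ((integrable_dirac' t).smul_measure ENNReal.ofReal_ne_top)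
        ((integrable_dirac' 1).smul_measure ENNReal.ofReal_ne_top),
        integral_smul_measure, integral_smul_measure, integral_dirac, integral_dirac,
        ENNReal.toReal_ofReal hw0, ENNReal.toReal_ofReal (by linarith)]
      simp only [smul_eq_mul, mul_one]
      linear_combination -hw'
    · rw [integral_add_measure ((integrable_dirac' t).smul_measure ENNReal.ofReal_ne_top)
        ((integrable_dirac' 1).smul_measure ENNReal.ofReal_ne_top),
        integral_smul_measure, integral_smul_measure, integral_dirac, integral_dirac,
        ENNReal.toReal_ofReal hw0, ENNReal.toReal_ofReal (by linarith)]
      simp only [smul_eq_mul, one_pow, mul_one]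
      linear_combination (-(1+t))*hw' - ht'
    · rw [integral_add_measure ((integrable_dirac' t).smul_measure ENNReal.ofReal_ne_top)
        ((integrable_dirac' 1).smul_measure ENNReal.ofReal_ne_top),
        integral_smul_measure, integral_smul_measure, integral_dirac, integral_dirac,
        ENNReal.toReal_ofReal hw0, ENNReal.toReal_ofReal (by linarith)]
      simp only [smul_eq_mul, P1]
      norm_num
      have hdiv : 2 * (μ - ν) ^ 2 / (1 - μ) = 2 * t^2 * (1 - μ) := by
        rw [← ht']; field_simp
      rw [hdiv]
      linear_combination (-(1+t-2*t^2))*hw' - ht'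
  · -- lower bound
    rintro x ⟨π, hp, hc, hm1, hm2, hP⟩
    have hae : ∀ᵐ q ∂π, q ∈ Set.Icc (0:ℝ) 1 := by
      rw [ae_iff]
      convert hc using 2
      rfl
    -- integrability of bounded measurable functions
    have hbd : ∀ (f : ℝ → ℝ), Continuous f → (∀ q ∈ Set.Icc (0:ℝ) 1, ‖f q‖ ≤ 5) →
        Integrable f π := by
      intro f hfc hfb
      refine (integrable_const (5:ℝ)).mono' hfc.aestronglyMeasurable ?_
      filter_upwards [hae] with q hq using hfb q hq
    have hI1 : Integrable (fun q : ℝ => q) π := by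
      refine hbd _ continuous_id ?_
      intro q hq; rw [Real.norm_eq_abs, abs_le]; constructor <;> [linarith [hq.1]; linarith [hq.2]]
    have hI2 : Integrable (fun q : ℝ => q ^ 2) π := by
      refine hbd _ (continuous_pow 2) ?_
      intro q hq
      rw [Real.norm_eq_abs, abs_le]
      refine ⟨by nlinarith [hq.1, hq.2], by nlinarith [hq.1, hq.2]⟩
    have hIP : Integrable (fun q : ℝ => P1 q) π := by
      refine hbd _ ?_ ?_
      · unfold P1
        exact (continuous_const.mul (continuous_pow 2)).sub
          (continuous_const.mul (continuous_pow 3))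
      intro q hq
      rw [Real.norm_eq_abs, abs_le]; unfold P1
      refine ⟨by nlinarith [hq.1, hq.2, sq_nonneg q], by nlinarith [hq.1, hq.2, sq_nonneg q]⟩
    -- the touching quadratic lower bound L(q) = (1-4t) q² + (2t²+4t) q - 2t²
    have hIL : Integrable (fun q : ℝ => (1 - 4*t) * q ^ 2 + ((2*t^2 + 4*t) * q - 2*t^2)) π := by
      exact ((hI2.const_mul _).add ((hI1.const_mul _).sub (integrable_const _)))
    have key : 0 ≤ ∫ q, (P1 q - ((1 - 4*t) * q ^ 2 + ((2*t^2 + 4*t) * q - 2*t^2))) ∂π := by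
      refine integral_nonneg_of_ae ?_
      filter_upwards [hae] with q hq
      have h1 : P1 q - ((1 - 4*t) * q ^ 2 + ((2*t^2 + 4*t) * q - 2*t^2))
          = 2 * (q - t)^2 * (1 - q) := by unfold P1; ring
      rw [h1]
      exact mul_nonneg (mul_nonneg (by norm_num) (sq_nonneg _)) (by linarith [hq.2])
    rw [integral_sub hIP hIL] at key
    have hJ : Integrable (fun q : ℝ => (2*t^2 + 4*t) * q - 2*t^2) π := by
      exact (hI1.const_mul _).sub (integrable_const _)
    have hK : Integrable (fun q : ℝ => (1 - 4*t) * q ^ 2) π := hI2.const_mul _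
    have hL : ∫ q, ((1 - 4*t) * q ^ 2 + ((2*t^2 + 4*t) * q - 2*t^2)) ∂π
        = (1 - 4*t) * ν + ((2*t^2 + 4*t) * μ - 2*t^2) := by
      rw [integral_add hK hJ, integral_sub (hI1.const_mul _) (integrable_const _),
        integral_const_mul, integral_const_mul, hm1, hm2, integral_const]
      simp
    rw [hL, hP] at key
    have heq : ν + 2 * (μ - ν) ^ 2 / (1 - μ) = (1 - 4*t) * ν + ((2*t^2 + 4*t) * μ - 2*t^2) := by
      have hdiv : 2 * (μ - ν) ^ 2 / (1 - μ) = 2 * t^2 * (1 - μ) := by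
        rw [← ht']; field_simp
      rw [hdiv]
      linear_combination (4*t)*ht'
    linarith [key]
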